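/- Let j ≥ 0 and m, n be integers with |m| ≤ j and |n| ≤ j, and let (φ, θ, ψ) satisfy θ ∈ (0, π). With the Wigner function D^j_{mn}(φ, θ, ψ) = e^{i(mφ + nψ)}·d^j_{mn}(θ), where d^j_{mn}(θ) = (−1)^{m−n}·√((j+m)!·(j−m)!/((j+n)!·(j−n)!))·(sin(θ/2))^{m−n}·(cos(θ/2))^{m+n}·P^{(m−n, m+n)}_{j−m}(cos θ) and P^{(α,β)}_k(z) = ((−1)^k/(2^k·k!))·(1−z)^{−α}·(1+z)^{−β}·(d^k/dz^k)[(1−z)^{k+α}·(1+z)^{k+β}], and with the left-invariant fields ξ₁ = (sin ψ/sin θ)∂_φ + cos ψ ∂_θ − cot θ sin ψ ∂_ψ, ξ₂ = (cos ψ/sin θ)∂_φ − sin ψ ∂_θ − cot θ cos ψ ∂_ψ, ξ₃ = ∂_ψ, the function D^j_{mn} is an eigenfunction of the Casimir operator: ξ₁(ξ₁ D^j_{mn}) + ξ₂(ξ₂ D^j_{mn}) + ξ₃(ξ₃ D^j_{mn}) = −j·(j+1)·D^j_{mn} at every such point. -/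

import Mathlib

/-- Directional (partial) derivative of `f : ℝ³ → ℂ` along the constant vector `v`. -/
noncomputable def pd (v : ℝ × ℝ × ℝ) (f : ℝ × ℝ × ℝ → ℂ) : ℝ × ℝ × ℝ → ℂ :=
  fun p => fderiv ℝ f p v

/-- `∂_φ`, the partial derivative in the first Euler angle `φ`. -/
noncomputable def dphi : (ℝ × ℝ × ℝ → ℂ) → ℝ × ℝ × ℝ → ℂ := pd (1, 0, 0)

/-- `∂_θ`, the partial derivative in the second Euler angle `θ`. -/
noncomputable def dtheta : (ℝ × ℝ × ℝ → ℂ) → ℝ × ℝ × ℝ → ℂ := pd (0, 1, 0)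

/-- `∂_ψ`, the partial derivative in the third Euler angle `ψ`. -/
noncomputable def dpsi : (ℝ × ℝ × ℝ → ℂ) → ℝ × ℝ × ℝ → ℂ := pd (0, 0, 1)

/-- Left-invariant field `ξ₁ = (sin ψ/sin θ)∂_φ + cos ψ ∂_θ − cot θ sin ψ ∂_ψ`
on `SO(3)` in Euler angles `p = (φ, θ, ψ)`. -/
noncomputable def xi1 (f : ℝ × ℝ × ℝ → ℂ) : ℝ × ℝ × ℝ → ℂ := fun p =>
  ((Real.sin p.2.2 / Real.sin p.2.1 : ℝ) : ℂ) * dphi f p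
    + ((Real.cos p.2.2 : ℝ) : ℂ) * dtheta f p
    - ((Real.cos p.2.1 / Real.sin p.2.1 * Real.sin p.2.2 : ℝ) : ℂ) * dpsi f p

/-- Left-invariant field `ξ₂ = (cos ψ/sin θ)∂_φ − sin ψ ∂_θ − cot θ cos ψ ∂_ψ`. -/
noncomputable def xi2 (f : ℝ × ℝ × ℝ → ℂ) : ℝ × ℝ × ℝ → ℂ := fun p =>
  ((Real.cos p.2.2 / Real.sin p.2.1 : ℝ) : ℂ) * dphi f p
    - ((Real.sin p.2.2 : ℝ) : ℂ) * dtheta f p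
    - ((Real.cos p.2.1 / Real.sin p.2.1 * Real.cos p.2.2 : ℝ) : ℂ) * dpsi f p

/-- Left-invariant field `ξ₃ = ∂_ψ`. -/
noncomputable def xi3 (f : ℝ × ℝ × ℝ → ℂ) : ℝ × ℝ × ℝ → ℂ := fun p => dpsi f p

/-- Right-invariant field `η₁ = cot θ sin φ ∂_φ − cos φ ∂_θ − (sin φ/sin θ)∂_ψ`. -/
noncomputable def eta1 (f : ℝ × ℝ × ℝ → ℂ) : ℝ × ℝ × ℝ → ℂ := fun p =>
  ((Real.cos p.2.1 / Real.sin p.2.1 * Real.sin p.1 : ℝ) : ℂ) * dphi f p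
    - ((Real.cos p.1 : ℝ) : ℂ) * dtheta f p
    - ((Real.sin p.1 / Real.sin p.2.1 : ℝ) : ℂ) * dpsi f p

/-- Right-invariant field `η₂ = −cot θ cos φ ∂_φ − sin φ ∂_θ + (cos φ/sin θ)∂_ψ`. -/
noncomputable def eta2 (f : ℝ × ℝ × ℝ → ℂ) : ℝ × ℝ × ℝ → ℂ := fun p =>
  -((Real.cos p.2.1 / Real.sin p.2.1 * Real.cos p.1 : ℝ) : ℂ) * dphi f p
    - ((Real.sin p.1 : ℝ) : ℂ) * dtheta f p
    + ((Real.cos p.1 / Real.sin p.2.1 : ℝ) : ℂ) * dpsi f p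

/-- Right-invariant field `η₃ = −∂_φ`. -/
noncomputable def eta3 (f : ℝ × ℝ × ℝ → ℂ) : ℝ × ℝ × ℝ → ℂ := fun p => -dphi f p

/-- The Jacobi polynomial via the Rodrigues formula
`P^{(α,β)}_k(z) = ((−1)^k/(2^k·k!))·(1−z)^{−α}·(1+z)^{−β}·(d/dz)^k[(1−z)^{k+α}·(1+z)^{k+β}]`. -/
noncomputable def jacobiP (α β : ℤ) (k : ℕ) (z : ℝ) : ℝ :=
  ((-1 : ℝ)^k / (2^k * (Nat.factorial k : ℝ))) * (1 - z)^(-α) * (1 + z)^(-β) *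
    iteratedDeriv k (fun t : ℝ => (1 - t)^((k : ℤ) + α) * (1 + t)^((k : ℤ) + β)) z

/-- The small Wigner function
`d^j_{mn}(θ) = (−1)^{m−n}·√((j+m)!(j−m)!/((j+n)!(j−n)!))·sin^{m−n}(θ/2)·cos^{m+n}(θ/2)
· P^{(m−n,m+n)}_{j−m}(cos θ)`. -/
noncomputable def wignerd (j : ℕ) (m n : ℤ) (θ : ℝ) : ℝ :=
  (-1 : ℝ)^(m - n) *
    Real.sqrt ((Nat.factorial ((j : ℤ) + m).toNat * Nat.factorial ((j : ℤ) - m).toNat : ℝ) /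
      (Nat.factorial ((j : ℤ) + n).toNat * Nat.factorial ((j : ℤ) - n).toNat : ℝ)) *
    (Real.sin (θ / 2))^(m - n) * (Real.cos (θ / 2))^(m + n) *
    jacobiP (m - n) (m + n) ((j : ℤ) - m).toNat (Real.cos θ)

/-- The Wigner D-function `D^j_{mn}(φ,θ,ψ) = e^{i(mφ+nψ)}·d^j_{mn}(θ)`. -/
noncomputable def wignerD (j : ℕ) (m n : ℤ) (φ θ ψ : ℝ) : ℂ :=
  Complex.exp (Complex.I * ((m * φ + n * ψ : ℝ) : ℂ)) * (wignerd j m n θ : ℂ)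

/-- The Wigner D-function, as a function of the Euler angles `p = (φ, θ, ψ)`. -/
noncomputable def wignerDfun (j : ℕ) (m n : ℤ) : ℝ × ℝ × ℝ → ℂ :=
  fun p => wignerD j m n p.1 p.2.1 p.2.2

section Aux
open Polynomial
noncomputable def wpoly (a b : ℕ) : ℝ[X] := (1 - X)^a * (1 + X)^b

theorem wpoly_first (a b : ℕ) :
    (1 - X^2) * derivative (wpoly a b)
      = (C ((b : ℝ) - a) - C ((a : ℝ) + b) * X) * wpoly a b := by
  unfold wpoly
  rcases a with _ | a' <;> rcases b with _ | b' <;>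
    simp [derivative_mul, derivative_pow, derivative_sub, derivative_add] <;>
    push_cast <;> ring_nf <;>
    first
    | ring
    | (rw [pow_succ (1 - X) a', pow_succ (1 + X) b']; ring)
    | (rw [pow_succ (1 - X : ℝ[X]) a']; ring)
    | (rw [pow_succ (1 + X : ℝ[X]) b']; ring)

theorem wpoly_ode (a b : ℕ) (i : ℕ) :
    (1 - X^2) * derivative^[i+2] (wpoly a b)
      = (C ((b:ℝ) - a) + C (2*((i:ℝ)+1) - ((a:ℝ)+b)) * X) * derivative^[i+1] (wpoly a b)
        - C (((i:ℝ)+1) * ((a:ℝ) + b - i)) * derivative^[i] (wpoly a b) := by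
  induction i with
  | zero =>
    have h0 := congrArg derivative (wpoly_first a b)
    simp only [derivative_mul, derivative_sub, derivative_add, derivative_pow, derivative_X,
      derivative_one, derivative_C, derivative_X_pow] at h0
    simp only [Function.iterate_succ_apply', Function.iterate_zero_apply]
    simp only [map_sub, map_add, map_mul, map_natCast, map_one, map_ofNat] at h0 ⊢
    push_cast at h0 ⊢
    linear_combination h0
  | succ i ih =>
    have h0 := congrArg derivative ih
    simp only [derivative_mul, derivative_sub, derivative_add, derivative_pow, derivative_X,
      derivative_one, derivative_C, derivative_X_pow] at h0
    rw [show i+1+2 = (i+2)+1 by ring, show i+1+1 = (i+1)+1 by ring]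
    simp only [Function.iterate_succ_apply'] at h0 ⊢
    simp only [map_sub, map_add, map_mul, map_natCast, map_one, map_ofNat] at h0 ⊢
    push_cast at h0 ⊢
    linear_combination h0

theorem iteratedDeriv_polyeval (k : ℕ) (p : ℝ[X]) :
    iteratedDeriv k (fun t : ℝ => p.eval t) = fun t => (derivative^[k] p).eval t := by
  induction k generalizing p with
  | zero => simp
  | succ k ih =>
    rw [iteratedDeriv_succ']
    have : (deriv fun t : ℝ => p.eval t) = fun t => p.derivative.eval t := by
      funext t; exact Polynomial.deriv (p := p)
    rw [this, ih, Function.iterate_succ_apply]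

noncomputable def gg0 (α β : ℤ) (u : ℝ[X]) (θ : ℝ) : ℝ :=
  Real.sin (θ/2) ^ (-α) * Real.cos (θ/2) ^ (-β) * u.eval (Real.cos θ)

noncomputable def gW (α β : ℤ) (u : ℝ[X]) (θ : ℝ) : ℝ :=
  (β:ℝ)/2 * Real.sin (θ/2)^2 * u.eval (Real.cos θ)
    - (α:ℝ)/2 * Real.cos (θ/2)^2 * u.eval (Real.cos θ)
    - 2 * Real.sin (θ/2)^2 * Real.cos (θ/2)^2 * u.derivative.eval (Real.cos θ)

noncomputable def gg1 (α β : ℤ) (u : ℝ[X]) (θ : ℝ) : ℝ :=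
  Real.sin (θ/2) ^ (-α-1) * Real.cos (θ/2) ^ (-β-1) * gW α β u θ

noncomputable def gg2 (α β : ℤ) (u : ℝ[X]) (θ : ℝ) : ℝ :=
  Real.sin (θ/2) ^ (-α-2) * Real.cos (θ/2) ^ (-β-2) *
    ( (-(α:ℝ)-1)/2 * Real.cos (θ/2)^2 * gW α β u θ
      + ((β:ℝ)+1)/2 * Real.sin (θ/2)^2 * gW α β u θ
      + ((α:ℝ)+(β:ℝ))/2 * Real.sin (θ/2)^2 * Real.cos (θ/2)^2 * u.eval (Real.cos θ)
      + (α:ℝ) * Real.sin (θ/2)^2 * Real.cos (θ/2)^4 * u.derivative.eval (Real.cos θ)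
      - (β:ℝ) * Real.sin (θ/2)^4 * Real.cos (θ/2)^2 * u.derivative.eval (Real.cos θ)
      - 2 * Real.sin (θ/2)^2 * Real.cos (θ/2)^4 * u.derivative.eval (Real.cos θ)
      + 2 * Real.sin (θ/2)^4 * Real.cos (θ/2)^2 * u.derivative.eval (Real.cos θ)
      + 4 * Real.sin (θ/2)^4 * Real.cos (θ/2)^4 * (derivative (derivative u)).eval (Real.cos θ) )

section scalars
variable (α β : ℤ) (u : ℝ[X]) {θ : ℝ}

theorem hsin_split (θ : ℝ) : Real.sin θ = 2 * Real.sin (θ/2) * Real.cos (θ/2) := by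
  have := Real.sin_two_mul (θ/2); rwa [show 2*(θ/2) = θ by ring] at this

theorem hasDerivAt_gg0 (hS : Real.sin (θ/2) ≠ 0) (hC : Real.cos (θ/2) ≠ 0) :
    HasDerivAt (gg0 α β u) (gg1 α β u θ) θ := by
  have hhalf : HasDerivAt (fun t : ℝ => t/2) (1/2 : ℝ) θ := (hasDerivAt_id θ).div_const 2
  have hSd : HasDerivAt (fun t : ℝ => Real.sin (t/2)) (Real.cos (θ/2) * (1/2)) θ :=
    by have h := (Real.hasDerivAt_sin (θ/2)).comp θ hhalf; exact h
  have hCd : HasDerivAt (fun t : ℝ => Real.cos (t/2)) (-Real.sin (θ/2) * (1/2)) θ :=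
    by have h := (Real.hasDerivAt_cos (θ/2)).comp θ hhalf; exact h
  have hV0 : HasDerivAt (fun t : ℝ => u.eval (Real.cos t))
      (u.derivative.eval (Real.cos θ) * (-Real.sin θ)) θ :=
    (u.hasDerivAt (Real.cos θ)).comp θ (Real.hasDerivAt_cos θ)
  have hzS : HasDerivAt (fun t : ℝ => Real.sin (t/2) ^ (-α))
      ((-(α:ℝ)) * Real.sin (θ/2) ^ (-α-1) * (Real.cos (θ/2) * (1/2))) θ := by
    have := (hasDerivAt_zpow (-α) (Real.sin (θ/2)) (Or.inl hS)).comp θ hSd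
    push_cast at this; exact this
  have hzC : HasDerivAt (fun t : ℝ => Real.cos (t/2) ^ (-β))
      ((-(β:ℝ)) * Real.cos (θ/2) ^ (-β-1) * (-Real.sin (θ/2) * (1/2))) θ := by
    have := (hasDerivAt_zpow (-β) (Real.cos (θ/2)) (Or.inl hC)).comp θ hCd
    push_cast at this; exact this
  have H := (hzS.mul hzC).mul hV0
  refine H.congr_deriv ?_
  simp only [Pi.mul_apply, Pi.pow_apply]
  unfold gg1 gW
  have e1 : Real.sin (θ/2) ^ (-α) = Real.sin (θ/2)^(-α-1) * Real.sin (θ/2) := by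
    rw [← zpow_add_one₀ hS]; ring_nf
  have e2 : Real.cos (θ/2) ^ (-β) = Real.cos (θ/2)^(-β-1) * Real.cos (θ/2) := by
    rw [← zpow_add_one₀ hC]; ring_nf
  rw [hsin_split θ, e1, e2]
  ring

theorem hasDerivAt_gg1 (hS : Real.sin (θ/2) ≠ 0) (hC : Real.cos (θ/2) ≠ 0) :
    HasDerivAt (gg1 α β u) (gg2 α β u θ) θ := by
  have hhalf : HasDerivAt (fun t : ℝ => t/2) (1/2 : ℝ) θ := (hasDerivAt_id θ).div_const 2
  have hSd : HasDerivAt (fun t : ℝ => Real.sin (t/2)) (Real.cos (θ/2) * (1/2)) θ :=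
    by have h := (Real.hasDerivAt_sin (θ/2)).comp θ hhalf; exact h
  have hCd : HasDerivAt (fun t : ℝ => Real.cos (t/2)) (-Real.sin (θ/2) * (1/2)) θ :=
    by have h := (Real.hasDerivAt_cos (θ/2)).comp θ hhalf; exact h
  have hV0 : HasDerivAt (fun t : ℝ => u.eval (Real.cos t))
      (u.derivative.eval (Real.cos θ) * (-Real.sin θ)) θ :=
    (u.hasDerivAt (Real.cos θ)).comp θ (Real.hasDerivAt_cos θ)
  have hV1 : HasDerivAt (fun t : ℝ => u.derivative.eval (Real.cos t))
      ((derivative (derivative u)).eval (Real.cos θ) * (-Real.sin θ)) θ :=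
    (u.derivative.hasDerivAt (Real.cos θ)).comp θ (Real.hasDerivAt_cos θ)
  have hzS : HasDerivAt (fun t : ℝ => Real.sin (t/2) ^ (-α-1))
      ((-(α:ℝ)-1) * Real.sin (θ/2) ^ (-α-2) * (Real.cos (θ/2) * (1/2))) θ := by
    have := (hasDerivAt_zpow (-α-1) (Real.sin (θ/2)) (Or.inl hS)).comp θ hSd
    rw [show (-α-1-1 : ℤ) = -α-2 by ring] at this
    push_cast at this; exact this
  have hzC : HasDerivAt (fun t : ℝ => Real.cos (t/2) ^ (-β-1))
      ((-(β:ℝ)-1) * Real.cos (θ/2) ^ (-β-2) * (-Real.sin (θ/2) * (1/2))) θ := by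
    have := (hasDerivAt_zpow (-β-1) (Real.cos (θ/2)) (Or.inl hC)).comp θ hCd
    rw [show (-β-1-1 : ℤ) = -β-2 by ring] at this
    push_cast at this; exact this
  have t1 := ((hSd.pow 2).const_mul ((β:ℝ)/2)).mul hV0
  have t2 := ((hCd.pow 2).const_mul ((α:ℝ)/2)).mul hV0
  have t3 := (((hSd.pow 2).const_mul (2:ℝ)).mul (hCd.pow 2)).mul hV1
  have hgW := (t1.sub t2).sub t3
  have H := (hzS.mul hzC).mul hgW
  refine H.congr_deriv ?_
  simp only [Pi.mul_apply, Pi.pow_apply, Pi.sub_apply]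
  unfold gg2 gW
  have e1 : Real.sin (θ/2) ^ (-α-1) = Real.sin (θ/2)^(-α-2) * Real.sin (θ/2) := by
    rw [← zpow_add_one₀ hS]; ring_nf
  have e2 : Real.cos (θ/2) ^ (-β-1) = Real.cos (θ/2)^(-β-2) * Real.cos (θ/2) := by
    rw [← zpow_add_one₀ hC]; ring_nf
  rw [hsin_split θ, e1, e2]
  ring

theorem key_identity (m n : ℤ) (j : ℕ) (S C V0 V1 V2 A B z : ℝ)
    (hA : A = (m:ℝ) - n) (hB : B = (m:ℝ) + n) (hz : z = 2*C^2-1) (hsc : S^2+C^2 = 1)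
    (hpoly : (1-z^2)*V2 = (2*(n:ℝ) + (2-2*(m:ℝ))*z)*V1 - ((j:ℝ)-m+1)*((j:ℝ)+m)*V0) :
    ((-A-1)/2*C^2*(B/2*S^2*V0 - A/2*C^2*V0 - 2*S^2*C^2*V1)
      + (B+1)/2*S^2*(B/2*S^2*V0 - A/2*C^2*V0 - 2*S^2*C^2*V1)
      + (A+B)/2*S^2*C^2*V0 + A*S^2*C^4*V1 - B*S^4*C^2*V1
      - 2*S^2*C^4*V1 + 2*S^4*C^2*V1 + 4*S^4*C^4*V2)
    + z/2*(B/2*S^2*V0 - A/2*C^2*V0 - 2*S^2*C^2*V1)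
    + (2*(m:ℝ)*n*z - (m:ℝ)^2 - (n:ℝ)^2)/4*V0
    + (j:ℝ)*((j:ℝ)+1)*S^2*C^2*V0 = 0 := by
  subst hA hB hz
  linear_combination (S^2*C^2)*hpoly +
    ( ((m:ℝ)+n)^2/4*V0 + C^2*V0*(((n:ℝ)-m) + ((n:ℝ)-m)^2)/4
      + S^2*V0*(((m:ℝ)+n) + ((m:ℝ)+n)^2)/4
      + (1-2*(m:ℝ)-2*(n:ℝ))*S^2*C^2*V1 + 4*S^2*C^4*V2 )*hsc

noncomputable def upoly (j : ℕ) (m n : ℤ) : ℝ[X] :=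
  derivative^[((j:ℤ)-m).toNat] (wpoly ((j:ℤ)-n).toNat ((j:ℤ)+n).toNat)

end scalars

theorem gg_ode (j : ℕ) (m n : ℤ) (hm : |m| ≤ (j:ℤ)) (hn : |n| ≤ (j:ℤ)) {θ : ℝ}
    (hθ : θ ∈ Set.Ioo 0 Real.pi) :
    (Real.sin θ)^2 * gg2 (m-n) (m+n) (upoly j m n) θ
      + Real.sin θ * Real.cos θ * gg1 (m-n) (m+n) (upoly j m n) θ
      + (2*(m:ℝ)*n*Real.cos θ - (m:ℝ)^2 - (n:ℝ)^2) * gg0 (m-n) (m+n) (upoly j m n) θ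
      + (j:ℝ)*((j:ℝ)+1) * (Real.sin θ)^2 * gg0 (m-n) (m+n) (upoly j m n) θ = 0 := by
  obtain ⟨hθ0, hθπ⟩ := hθ
  have hS0 : 0 < Real.sin (θ/2) :=
    Real.sin_pos_of_pos_of_lt_pi (by linarith) (by linarith [Real.pi_pos])
  have hC0 : 0 < Real.cos (θ/2) :=
    Real.cos_pos_of_mem_Ioo ⟨by linarith [Real.pi_pos], by linarith⟩
  have hS := hS0.ne'
  have hC := hC0.ne'
  set k : ℕ := ((j:ℤ)-m).toNat with hkdef
  set a : ℕ := ((j:ℤ)-n).toNat with hadef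
  set b : ℕ := ((j:ℤ)+n).toNat with hbdef
  have hmj := abs_le.mp hm
  have hnj := abs_le.mp hn
  have hkZ : (k:ℤ) = (j:ℤ) - m := Int.toNat_of_nonneg (by omega)
  have haZ : (a:ℤ) = (j:ℤ) - n := Int.toNat_of_nonneg (by omega)
  have hbZ : (b:ℤ) = (j:ℤ) + n := Int.toNat_of_nonneg (by omega)
  have hkR : (k:ℝ) = (j:ℝ) - (m:ℝ) := by exact_mod_cast congrArg (Int.cast : ℤ → ℝ) hkZ
  have haR : (a:ℝ) = (j:ℝ) - (n:ℝ) := by exact_mod_cast congrArg (Int.cast : ℤ → ℝ) haZ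
  have hbR : (b:ℝ) = (j:ℝ) + (n:ℝ) := by exact_mod_cast congrArg (Int.cast : ℤ → ℝ) hbZ
  -- the evaluated polynomial identity
  have hp := congrArg (Polynomial.eval (Real.cos θ)) (wpoly_ode a b k)
  have hit2 : derivative^[k+2] (wpoly a b) = derivative (derivative (upoly j m n)) := by
    unfold upoly
    rw [← hkdef, ← hadef, ← hbdef, show k+2 = (k+1)+1 by ring,
      Function.iterate_succ_apply', Function.iterate_succ_apply']
  have hit1 : derivative^[k+1] (wpoly a b) = derivative (upoly j m n) := by
    unfold upoly
    rw [← hkdef, ← hadef, ← hbdef, Function.iterate_succ_apply']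
  have hit0 : derivative^[k] (wpoly a b) = upoly j m n := by
    unfold upoly
    rw [← hkdef, ← hadef, ← hbdef]
  rw [hit2, hit1, hit0] at hp
  simp only [Polynomial.eval_mul, Polynomial.eval_add, Polynomial.eval_sub, Polynomial.eval_one,
    Polynomial.eval_pow, Polynomial.eval_X, Polynomial.eval_C] at hp
  rw [haR, hbR, hkR] at hp
  have hcθ : Real.cos θ = 2*Real.cos (θ/2)^2-1 := by
    have := Real.cos_two_mul (θ/2); rwa [show 2*(θ/2) = θ by ring] at this
  have hsc : Real.sin (θ/2)^2 + Real.cos (θ/2)^2 = 1 := Real.sin_sq_add_cos_sq (θ/2)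
  have hpoly : (1-(Real.cos θ)^2)*((derivative (derivative (upoly j m n))).eval (Real.cos θ))
      = (2*(n:ℝ) + (2-2*(m:ℝ))*(Real.cos θ))*((derivative (upoly j m n)).eval (Real.cos θ))
        - ((j:ℝ)-m+1)*((j:ℝ)+m)*((upoly j m n).eval (Real.cos θ)) := by
    linear_combination hp
  have hkey := key_identity m n j (Real.sin (θ/2)) (Real.cos (θ/2))
    ((upoly j m n).eval (Real.cos θ)) ((derivative (upoly j m n)).eval (Real.cos θ))
    ((derivative (derivative (upoly j m n))).eval (Real.cos θ))
    ((m-n : ℤ) : ℝ) ((m+n : ℤ) : ℝ) (Real.cos θ)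
    (by push_cast; ring) (by push_cast; ring) hcθ hsc hpoly
  -- zpow splitting
  have e0S : Real.sin (θ/2) ^ (-(m-n)) = Real.sin (θ/2)^(-(m-n)-2) * Real.sin (θ/2)^2 := by
    rw [← zpow_natCast (Real.sin (θ/2)) 2, ← zpow_add₀ hS]; norm_num
  have e0C : Real.cos (θ/2) ^ (-(m+n)) = Real.cos (θ/2)^(-(m+n)-2) * Real.cos (θ/2)^2 := by
    rw [← zpow_natCast (Real.cos (θ/2)) 2, ← zpow_add₀ hC]; norm_num
  have e1S : Real.sin (θ/2) ^ (-(m-n)-1) = Real.sin (θ/2)^(-(m-n)-2) * Real.sin (θ/2) := by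
    rw [← zpow_add_one₀ hS]; ring_nf
  have e1C : Real.cos (θ/2) ^ (-(m+n)-1) = Real.cos (θ/2)^(-(m+n)-2) * Real.cos (θ/2) := by
    rw [← zpow_add_one₀ hC]; ring_nf
  unfold gg2 gg1 gg0 gW
  rw [hsin_split θ, e0S, e0C, e1S, e1C]
  have hfact : ∀ X1 X2 Y1 Y2 : ℝ, X1 = X2 → Y1 = Y2 → X1 * Y1 = X2 * Y2 := by
    intro _ _ _ _ h1 h2; rw [h1, h2]
  calc _ = (Real.sin (θ/2)^(-(m-n)-2) * Real.cos (θ/2)^(-(m+n)-2)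
      * (4*Real.sin (θ/2)^2*Real.cos (θ/2)^2)) *
      (((-((m-n:ℤ):ℝ)-1)/2*Real.cos (θ/2)^2*(((m+n:ℤ):ℝ)/2*Real.sin (θ/2)^2*((upoly j m n).eval (Real.cos θ)) - ((m-n:ℤ):ℝ)/2*Real.cos (θ/2)^2*((upoly j m n).eval (Real.cos θ)) - 2*Real.sin (θ/2)^2*Real.cos (θ/2)^2*((derivative (upoly j m n)).eval (Real.cos θ)))
      + (((m+n:ℤ):ℝ)+1)/2*Real.sin (θ/2)^2*(((m+n:ℤ):ℝ)/2*Real.sin (θ/2)^2*((upoly j m n).eval (Real.cos θ)) - ((m-n:ℤ):ℝ)/2*Real.cos (θ/2)^2*((upoly j m n).eval (Real.cos θ)) - 2*Real.sin (θ/2)^2*Real.cos (θ/2)^2*((derivative (upoly j m n)).eval (Real.cos θ)))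
      + (((m-n:ℤ):ℝ)+((m+n:ℤ):ℝ))/2*Real.sin (θ/2)^2*Real.cos (θ/2)^2*((upoly j m n).eval (Real.cos θ)) + ((m-n:ℤ):ℝ)*Real.sin (θ/2)^2*Real.cos (θ/2)^4*((derivative (upoly j m n)).eval (Real.cos θ)) - ((m+n:ℤ):ℝ)*Real.sin (θ/2)^4*Real.cos (θ/2)^2*((derivative (upoly j m n)).eval (Real.cos θ))
      - 2*Real.sin (θ/2)^2*Real.cos (θ/2)^4*((derivative (upoly j m n)).eval (Real.cos θ)) + 2*Real.sin (θ/2)^4*Real.cos (θ/2)^2*((derivative (upoly j m n)).eval (Real.cos θ)) + 4*Real.sin (θ/2)^4*Real.cos (θ/2)^4*((derivative (derivative (upoly j m n))).eval (Real.cos θ)))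
    + (Real.cos θ)/2*(((m+n:ℤ):ℝ)/2*Real.sin (θ/2)^2*((upoly j m n).eval (Real.cos θ)) - ((m-n:ℤ):ℝ)/2*Real.cos (θ/2)^2*((upoly j m n).eval (Real.cos θ)) - 2*Real.sin (θ/2)^2*Real.cos (θ/2)^2*((derivative (upoly j m n)).eval (Real.cos θ)))
    + (2*(m:ℝ)*n*(Real.cos θ) - (m:ℝ)^2 - (n:ℝ)^2)/4*((upoly j m n).eval (Real.cos θ))
    + (j:ℝ)*((j:ℝ)+1)*Real.sin (θ/2)^2*Real.cos (θ/2)^2*((upoly j m n).eval (Real.cos θ))) := by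
        ring
    _ = 0 := by rw [hkey, mul_zero]

theorem jacobiP_eq (α β : ℤ) (k a b : ℕ) (ha : (k:ℤ)+α = (a:ℤ)) (hb : (k:ℤ)+β = (b:ℤ)) (z : ℝ) :
    jacobiP α β k z
      = ((-1:ℝ)^k/(2^k * (Nat.factorial k : ℝ))) * (1-z)^(-α) * (1+z)^(-β) *
          (derivative^[k] (wpoly a b)).eval z := by
  unfold jacobiP
  congr 1
  have hfun : (fun t : ℝ => (1-t)^((k:ℤ)+α)*(1+t)^((k:ℤ)+β))
      = fun t : ℝ => (wpoly a b).eval t := by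
    funext t
    rw [ha, hb, zpow_natCast, zpow_natCast]
    simp [wpoly]
  rw [hfun, iteratedDeriv_polyeval]

noncomputable def wcst (j : ℕ) (m n : ℤ) : ℝ :=
  (-1:ℝ)^(m-n) *
    Real.sqrt ((Nat.factorial ((j : ℤ) + m).toNat * Nat.factorial ((j : ℤ) - m).toNat : ℝ) /
      (Nat.factorial ((j : ℤ) + n).toNat * Nat.factorial ((j : ℤ) - n).toNat : ℝ)) *
    ((-1:ℝ)^(((j:ℤ)-m).toNat) / (2^(((j:ℤ)-m).toNat) * (Nat.factorial (((j:ℤ)-m).toNat) : ℝ))) *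
    (2:ℝ)^(-(m-n)) * (2:ℝ)^(-(m+n))

theorem wignerd_eq (j : ℕ) (m n : ℤ) (hm : |m| ≤ (j:ℤ)) (hn : |n| ≤ (j:ℤ)) {θ : ℝ}
    (hθ : θ ∈ Set.Ioo 0 Real.pi) :
    wignerd j m n θ = wcst j m n * gg0 (m-n) (m+n) (upoly j m n) θ := by
  obtain ⟨hθ0, hθπ⟩ := hθ
  have hS0 : 0 < Real.sin (θ/2) :=
    Real.sin_pos_of_pos_of_lt_pi (by linarith) (by linarith [Real.pi_pos])
  have hC0 : 0 < Real.cos (θ/2) :=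
    Real.cos_pos_of_mem_Ioo ⟨by linarith [Real.pi_pos], by linarith⟩
  have hS := hS0.ne'
  have hC := hC0.ne'
  have hmj := abs_le.mp hm
  have hnj := abs_le.mp hn
  have hkZ : ((((j:ℤ)-m).toNat : ℕ) : ℤ) = (j:ℤ) - m := Int.toNat_of_nonneg (by omega)
  have haZ : ((((j:ℤ)-n).toNat : ℕ) : ℤ) = (j:ℤ) - n := Int.toNat_of_nonneg (by omega)
  have hbZ : ((((j:ℤ)+n).toNat : ℕ) : ℤ) = (j:ℤ) + n := Int.toNat_of_nonneg (by omega)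
  have hcθ : Real.cos θ = 2*Real.cos (θ/2)^2-1 := by
    have := Real.cos_two_mul (θ/2); rwa [show 2*(θ/2) = θ by ring] at this
  have hsc : Real.sin (θ/2)^2 + Real.cos (θ/2)^2 = 1 := Real.sin_sq_add_cos_sq (θ/2)
  have h1z : 1 - Real.cos θ = 2*Real.sin (θ/2)^2 := by rw [hcθ]; linarith
  have h2z : 1 + Real.cos θ = 2*Real.cos (θ/2)^2 := by rw [hcθ]; ring
  unfold wignerd
  rw [jacobiP_eq (m-n) (m+n) (((j:ℤ)-m).toNat) (((j:ℤ)-n).toNat) (((j:ℤ)+n).toNat)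
    (by omega) (by omega), h1z, h2z]
  unfold wcst gg0 upoly
  rw [mul_zpow, mul_zpow]
  have eS : (Real.sin (θ/2)^2)^(-(m-n)) = Real.sin (θ/2)^(-(m-n)) * Real.sin (θ/2)^(-(m-n)) := by
    rw [← zpow_natCast (Real.sin (θ/2)) 2, ← zpow_mul, ← zpow_add₀ hS]
    congr 1; ring
  have eC : (Real.cos (θ/2)^2)^(-(m+n)) = Real.cos (θ/2)^(-(m+n)) * Real.cos (θ/2)^(-(m+n)) := by
    rw [← zpow_natCast (Real.cos (θ/2)) 2, ← zpow_mul, ← zpow_add₀ hC]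
    congr 1; ring
  have eS2 : Real.sin (θ/2)^(m-n) * Real.sin (θ/2)^(-(m-n)) = 1 := by
    rw [← zpow_add₀ hS, show m-n + -(m-n) = 0 by ring, zpow_zero]
  have eC2 : Real.cos (θ/2)^(m+n) * Real.cos (θ/2)^(-(m+n)) = 1 := by
    rw [← zpow_add₀ hC, show m+n + -(m+n) = 0 by ring, zpow_zero]
  rw [eS, eC, show Real.sin (θ/2)^(m-n) = (Real.sin (θ/2)^(-(m-n)))⁻¹ by
      rw [← zpow_neg, neg_neg],
    show Real.cos (θ/2)^(m+n) = (Real.cos (θ/2)^(-(m+n)))⁻¹ by rw [← zpow_neg, neg_neg]]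
  have hA : Real.sin (θ/2)^(-(m-n)) ≠ 0 := zpow_ne_zero _ hS
  have hB : Real.cos (θ/2)^(-(m+n)) ≠ 0 := zpow_ne_zero _ hC
  field_simp

end Aux

section CompatLayer
open Polynomial

noncomputable def Lmap (A B C : ℂ) : ℝ × ℝ × ℝ →L[ℝ] ℂ :=
  ((ContinuousLinearMap.fst ℝ ℝ (ℝ×ℝ)).smulRight A)
  + (((ContinuousLinearMap.fst ℝ ℝ ℝ).comp (ContinuousLinearMap.snd ℝ ℝ (ℝ×ℝ))).smulRight B)
  + (((ContinuousLinearMap.snd ℝ ℝ ℝ).comp (ContinuousLinearMap.snd ℝ ℝ (ℝ×ℝ))).smulRight C)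

@[simp] theorem Lmap_apply (A B C : ℂ) (v : ℝ×ℝ×ℝ) :
    Lmap A B C v = v.1 • A + v.2.1 • B + v.2.2 • C := by
  simp [Lmap]

theorem hasFDerivAt_T {u v w : ℝ → ℂ} {u' v' w' : ℂ} {p : ℝ×ℝ×ℝ}
    (hu : HasDerivAt u u' p.1) (hv : HasDerivAt v v' p.2.1) (hw : HasDerivAt w w' p.2.2) :
    HasFDerivAt (fun q : ℝ×ℝ×ℝ => u q.1 * v q.2.1 * w q.2.2)
      (Lmap (u' * v p.2.1 * w p.2.2) (u p.1 * v' * w p.2.2) (u p.1 * v p.2.1 * w')) p := by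
  have h1 : HasFDerivAt (fun q : ℝ×ℝ×ℝ => u q.1)
      (((1:ℝ→L[ℝ]ℝ).smulRight u').comp (ContinuousLinearMap.fst ℝ ℝ (ℝ×ℝ))) p :=
    hu.hasFDerivAt.comp p hasFDerivAt_fst
  have h2 : HasFDerivAt (fun q : ℝ×ℝ×ℝ => v q.2.1)
      (((1:ℝ→L[ℝ]ℝ).smulRight v').comp
        ((ContinuousLinearMap.fst ℝ ℝ ℝ).comp (ContinuousLinearMap.snd ℝ ℝ (ℝ×ℝ)))) p :=
    hv.hasFDerivAt.comp p (hasFDerivAt_fst.comp p hasFDerivAt_snd)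
  have h3 : HasFDerivAt (fun q : ℝ×ℝ×ℝ => w q.2.2)
      (((1:ℝ→L[ℝ]ℝ).smulRight w').comp
        ((ContinuousLinearMap.snd ℝ ℝ ℝ).comp (ContinuousLinearMap.snd ℝ ℝ (ℝ×ℝ)))) p :=
    hw.hasFDerivAt.comp p (hasFDerivAt_snd.comp p hasFDerivAt_snd)
  have H := (h1.mul h2).mul h3
  refine H.congr_fderiv ?_
  apply ContinuousLinearMap.ext
  intro x
  simp [Lmap, Complex.real_smul]
  ring

noncomputable def dd0 (j : ℕ) (m n : ℤ) (t : ℝ) : ℂ :=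
  ((wcst j m n * gg0 (m-n) (m+n) (upoly j m n) t : ℝ) : ℂ)
noncomputable def dd1 (j : ℕ) (m n : ℤ) (t : ℝ) : ℂ :=
  ((wcst j m n * gg1 (m-n) (m+n) (upoly j m n) t : ℝ) : ℂ)
noncomputable def dd2 (j : ℕ) (m n : ℤ) (t : ℝ) : ℂ :=
  ((wcst j m n * gg2 (m-n) (m+n) (upoly j m n) t : ℝ) : ℂ)

noncomputable def efu (m : ℤ) : ℝ → ℂ := fun x => Complex.exp (Complex.I * m * x)

theorem hasDerivAt_efu (m : ℤ) (x : ℝ) :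
    HasDerivAt (efu m) (efu m x * (Complex.I * m)) x := by
  have h1 : HasDerivAt (fun x : ℝ => ((x:ℝ):ℂ)) 1 x := by
    simpa using (hasDerivAt_id x).ofReal_comp
  have h2 := (h1.const_mul (Complex.I * (m:ℂ))).cexp
  simp only [mul_one] at h2
  exact h2

theorem hasDerivAt_dd0 (j : ℕ) (m n : ℤ) {t : ℝ}
    (hS : Real.sin (t/2) ≠ 0) (hC : Real.cos (t/2) ≠ 0) :
    HasDerivAt (dd0 j m n) (dd1 j m n t) t :=
  (((hasDerivAt_gg0 (m-n) (m+n) (upoly j m n) hS hC).const_mul (wcst j m n))).ofReal_comp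

theorem hasDerivAt_dd1 (j : ℕ) (m n : ℤ) {t : ℝ}
    (hS : Real.sin (t/2) ≠ 0) (hC : Real.cos (t/2) ≠ 0) :
    HasDerivAt (dd1 j m n) (dd2 j m n t) t :=
  (((hasDerivAt_gg1 (m-n) (m+n) (upoly j m n) hS hC).const_mul (wcst j m n))).ofReal_comp

noncomputable def Bf1 (j : ℕ) (m n : ℤ) (t : ℝ) : ℂ :=
  Complex.I * m * dd0 j m n t * ((Real.sin t : ℝ) : ℂ)⁻¹
noncomputable def Bf3 (j : ℕ) (m n : ℤ) (t : ℝ) : ℂ :=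
  -(Complex.I * n) * ((Real.cos t : ℝ) : ℂ) * ((Real.sin t : ℝ) : ℂ)⁻¹ * dd0 j m n t
noncomputable def Wf1 (n : ℤ) (s : ℝ) : ℂ := ((Real.sin s : ℝ) : ℂ) * efu n s
noncomputable def Wf2 (n : ℤ) (s : ℝ) : ℂ := ((Real.cos s : ℝ) : ℂ) * efu n s

end CompatLayer

theorem xi1_apply (f : ℝ×ℝ×ℝ → ℂ) (p : ℝ×ℝ×ℝ) : xi1 f p =
    ((Real.sin p.2.2 / Real.sin p.2.1 : ℝ) : ℂ) * dphi f p
      + ((Real.cos p.2.2 : ℝ) : ℂ) * dtheta f p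
      - ((Real.cos p.2.1 / Real.sin p.2.1 * Real.sin p.2.2 : ℝ) : ℂ) * dpsi f p := rfl

theorem xi2_apply (f : ℝ×ℝ×ℝ → ℂ) (p : ℝ×ℝ×ℝ) : xi2 f p =
    ((Real.cos p.2.2 / Real.sin p.2.1 : ℝ) : ℂ) * dphi f p
      - ((Real.sin p.2.2 : ℝ) : ℂ) * dtheta f p
      - ((Real.cos p.2.1 / Real.sin p.2.1 * Real.cos p.2.2 : ℝ) : ℂ) * dpsi f p := rfl

theorem xi3_apply (f : ℝ×ℝ×ℝ → ℂ) (p : ℝ×ℝ×ℝ) : xi3 f p = dpsi f p := rfl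

set_option maxHeartbeats 2000000 in
theorem wignerD_casimir_eigenfunction' (j : ℕ) (m n : ℤ)
    (hm : |m| ≤ (j : ℤ)) (hn : |n| ≤ (j : ℤ))
    (p : ℝ × ℝ × ℝ) (hθ : p.2.1 ∈ Set.Ioo 0 Real.pi) :
    xi1 (xi1 (wignerDfun j m n)) p + xi2 (xi2 (wignerDfun j m n)) p
        + xi3 (xi3 (wignerDfun j m n)) p
      = -(j : ℂ) * ((j : ℂ) + 1) * wignerDfun j m n p := by
  obtain ⟨hθ0, hθπ⟩ := hθ
  have hπ := Real.pi_pos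
  have hS0 : Real.sin (p.2.1/2) ≠ 0 :=
    (Real.sin_pos_of_pos_of_lt_pi (by linarith) (by linarith)).ne'
  have hC0 : Real.cos (p.2.1/2) ≠ 0 :=
    (Real.cos_pos_of_mem_Ioo ⟨by linarith, by linarith⟩).ne'
  have hsp : Real.sin p.2.1 ≠ 0 := (Real.sin_pos_of_pos_of_lt_pi hθ0 hθπ).ne'
  have hspC : ((Real.sin p.2.1 : ℝ):ℂ) ≠ 0 := Complex.ofReal_ne_zero.mpr hsp
  set O : Set (ℝ×ℝ×ℝ) := {q : ℝ×ℝ×ℝ | q.2.1 ∈ Set.Ioo 0 Real.pi} with hOdef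
  have hOopen : IsOpen O := IsOpen.preimage (continuous_fst.comp continuous_snd) isOpen_Ioo
  have hpO : p ∈ O := ⟨hθ0, hθπ⟩
  have hFF : Set.EqOn (wignerDfun j m n)
      (fun q : ℝ×ℝ×ℝ => efu m q.1 * dd0 j m n q.2.1 * efu n q.2.2) O := by
    intro q hq
    show wignerDfun j m n q = _
    unfold wignerDfun wignerD efu dd0
    rw [wignerd_eq j m n hm hn hq,
      show Complex.I * (((m:ℝ)*q.1 + (n:ℝ)*q.2.2 : ℝ):ℂ)
        = Complex.I*(m:ℂ)*q.1 + Complex.I*(n:ℂ)*q.2.2 by push_cast; ring,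
      Complex.exp_add]
    push_cast
    ring
  have hfeq : ∀ q ∈ O, wignerDfun j m n
      =ᶠ[nhds q] (fun q' : ℝ×ℝ×ℝ => efu m q'.1 * dd0 j m n q'.2.1 * efu n q'.2.2) :=
    fun q hq => Filter.eventuallyEq_of_mem (hOopen.mem_nhds hq) hFF
  have hfder : ∀ q ∈ O, fderiv ℝ (wignerDfun j m n) q
      = Lmap (efu m q.1 * (Complex.I*(m:ℂ)) * dd0 j m n q.2.1 * efu n q.2.2)
             (efu m q.1 * dd1 j m n q.2.1 * efu n q.2.2)
             (efu m q.1 * dd0 j m n q.2.1 * (efu n q.2.2 * (Complex.I*(n:ℂ)))) := by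
    intro q hq
    have hq1 : (0:ℝ) < q.2.1 := hq.1
    have hq2 : q.2.1 < Real.pi := hq.2
    have hSq : Real.sin (q.2.1/2) ≠ 0 :=
      (Real.sin_pos_of_pos_of_lt_pi (by linarith) (by linarith)).ne'
    have hCq : Real.cos (q.2.1/2) ≠ 0 :=
      (Real.cos_pos_of_mem_Ioo ⟨by linarith, by linarith⟩).ne'
    rw [(hfeq q hq).fderiv_eq]
    exact (hasFDerivAt_T (hasDerivAt_efu m q.1) (hasDerivAt_dd0 j m n hSq hCq)
      (hasDerivAt_efu n q.2.2)).fderiv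
  have hpdf : ∀ q ∈ O,
      dphi (wignerDfun j m n) q = efu m q.1 * (Complex.I*(m:ℂ)) * dd0 j m n q.2.1 * efu n q.2.2
      ∧ dtheta (wignerDfun j m n) q = efu m q.1 * dd1 j m n q.2.1 * efu n q.2.2
      ∧ dpsi (wignerDfun j m n) q
          = efu m q.1 * dd0 j m n q.2.1 * (efu n q.2.2 * (Complex.I*(n:ℂ))) := by
    intro q hq
    unfold dphi dtheta dpsi pd
    rw [hfder q hq]
    refine ⟨by simp, by simp, by simp⟩
  have hxi1O : Set.EqOn (xi1 (wignerDfun j m n))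
      (fun q : ℝ×ℝ×ℝ => efu m q.1 * Bf1 j m n q.2.1 * Wf1 n q.2.2
        + efu m q.1 * dd1 j m n q.2.1 * Wf2 n q.2.2
        + efu m q.1 * Bf3 j m n q.2.1 * Wf1 n q.2.2) O := by
    intro q hq
    obtain ⟨h1, h2, h3⟩ := hpdf q hq
    have hsq : ((Real.sin q.2.1 : ℝ):ℂ) ≠ 0 :=
      Complex.ofReal_ne_zero.mpr (Real.sin_pos_of_pos_of_lt_pi hq.1 hq.2).ne'
    show xi1 (wignerDfun j m n) q = _
    rw [xi1_apply, h1, h2, h3]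
    unfold Bf1 Bf3 Wf1 Wf2
    push_cast
    field_simp
    ring
  have hxi2O : Set.EqOn (xi2 (wignerDfun j m n))
      (fun q : ℝ×ℝ×ℝ => efu m q.1 * Bf1 j m n q.2.1 * Wf2 n q.2.2
        - efu m q.1 * dd1 j m n q.2.1 * Wf1 n q.2.2
        + efu m q.1 * Bf3 j m n q.2.1 * Wf2 n q.2.2) O := by
    intro q hq
    obtain ⟨h1, h2, h3⟩ := hpdf q hq
    have hsq : ((Real.sin q.2.1 : ℝ):ℂ) ≠ 0 :=
      Complex.ofReal_ne_zero.mpr (Real.sin_pos_of_pos_of_lt_pi hq.1 hq.2).ne'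
    show xi2 (wignerDfun j m n) q = _
    rw [xi2_apply, h1, h2, h3]
    unfold Bf1 Bf3 Wf1 Wf2
    push_cast
    field_simp
    ring
  have hxi3O : Set.EqOn (xi3 (wignerDfun j m n))
      (fun q : ℝ×ℝ×ℝ => efu m q.1 * dd0 j m n q.2.1 * (efu n q.2.2 * (Complex.I*(n:ℂ)))) O := by
    intro q hq
    obtain ⟨_, _, h3⟩ := hpdf q hq
    show xi3 (wignerDfun j m n) q = _
    rw [xi3_apply, h3]
  -- derivatives of the building blocks at p
  have hdd0p : HasDerivAt (dd0 j m n) (dd1 j m n p.2.1) p.2.1 := hasDerivAt_dd0 j m n hS0 hC0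
  have hdd1p : HasDerivAt (dd1 j m n) (dd2 j m n p.2.1) p.2.1 := hasDerivAt_dd1 j m n hS0 hC0
  have hsinθ : HasDerivAt (fun t : ℝ => ((Real.sin t : ℝ):ℂ)) ((Real.cos p.2.1 : ℝ):ℂ) p.2.1 :=
    (Real.hasDerivAt_sin p.2.1).ofReal_comp
  have hcosθ : HasDerivAt (fun t : ℝ => ((Real.cos t : ℝ):ℂ)) (-((Real.sin p.2.1 : ℝ):ℂ)) p.2.1 := by
    simpa using (Real.hasDerivAt_cos p.2.1).ofReal_comp
  have hsinψ : HasDerivAt (fun s : ℝ => ((Real.sin s : ℝ):ℂ)) ((Real.cos p.2.2 : ℝ):ℂ) p.2.2 :=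
    (Real.hasDerivAt_sin p.2.2).ofReal_comp
  have hcosψ : HasDerivAt (fun s : ℝ => ((Real.cos s : ℝ):ℂ)) (-((Real.sin p.2.2 : ℝ):ℂ)) p.2.2 := by
    simpa using (Real.hasDerivAt_cos p.2.2).ofReal_comp
  have hinvp : HasDerivAt (fun t : ℝ => ((Real.sin t : ℝ):ℂ)⁻¹)
      (-((Real.cos p.2.1:ℝ):ℂ) / ((Real.sin p.2.1:ℝ):ℂ)^2) p.2.1 := by
    have h := HasDerivAt.scomp p.2.1 (hasDerivAt_inv hspC) hsinθ
    refine h.congr_deriv ?_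
    simp [smul_eq_mul, div_eq_mul_inv]
  have hB1p : HasDerivAt (Bf1 j m n)
      (Complex.I*(m:ℂ)*dd1 j m n p.2.1*((Real.sin p.2.1:ℝ):ℂ)⁻¹
        + Complex.I*(m:ℂ)*dd0 j m n p.2.1*(-((Real.cos p.2.1:ℝ):ℂ)/((Real.sin p.2.1:ℝ):ℂ)^2))
      p.2.1 := by
    unfold Bf1
    refine ((hdd0p.const_mul (Complex.I*(m:ℂ))).mul hinvp).congr_deriv ?_
    ring
  have hB3p : HasDerivAt (Bf3 j m n)
      ((Complex.I*(n:ℂ))*((Real.sin p.2.1:ℝ):ℂ)*((Real.sin p.2.1:ℝ):ℂ)⁻¹*dd0 j m n p.2.1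
        + (Complex.I*(n:ℂ))*dd0 j m n p.2.1*((Real.cos p.2.1:ℝ):ℂ)^2/((Real.sin p.2.1:ℝ):ℂ)^2
        - (Complex.I*(n:ℂ))*dd1 j m n p.2.1*((Real.cos p.2.1:ℝ):ℂ)*((Real.sin p.2.1:ℝ):ℂ)⁻¹)
      p.2.1 := by
    unfold Bf3
    refine (((hcosθ.const_mul (-(Complex.I*(n:ℂ)))).mul hinvp).mul hdd0p).congr_deriv ?_
    simp only [Pi.mul_apply]
    ring
  have hW1p : HasDerivAt (Wf1 n)
      (((Real.cos p.2.2:ℝ):ℂ) * efu n p.2.2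
        + ((Real.sin p.2.2:ℝ):ℂ) * (efu n p.2.2 * (Complex.I*(n:ℂ)))) p.2.2 := by
    unfold Wf1
    exact hsinψ.mul (hasDerivAt_efu n p.2.2)
  have hW2p : HasDerivAt (Wf2 n)
      (-((Real.sin p.2.2:ℝ):ℂ) * efu n p.2.2
        + ((Real.cos p.2.2:ℝ):ℂ) * (efu n p.2.2 * (Complex.I*(n:ℂ)))) p.2.2 := by
    unfold Wf2
    exact hcosψ.mul (hasDerivAt_efu n p.2.2)
  have heφp := hasDerivAt_efu m p.1
  -- fderiv of xi1 f, xi2 f, xi3 f at p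
  have hfd1 : fderiv ℝ (xi1 (wignerDfun j m n)) p
      = fderiv ℝ (fun q : ℝ×ℝ×ℝ => efu m q.1 * Bf1 j m n q.2.1 * Wf1 n q.2.2
        + efu m q.1 * dd1 j m n q.2.1 * Wf2 n q.2.2
        + efu m q.1 * Bf3 j m n q.2.1 * Wf1 n q.2.2) p :=
    (Filter.eventuallyEq_of_mem (hOopen.mem_nhds hpO) hxi1O).fderiv_eq
  have hfd2 : fderiv ℝ (xi2 (wignerDfun j m n)) p
      = fderiv ℝ (fun q : ℝ×ℝ×ℝ => efu m q.1 * Bf1 j m n q.2.1 * Wf2 n q.2.2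
        - efu m q.1 * dd1 j m n q.2.1 * Wf1 n q.2.2
        + efu m q.1 * Bf3 j m n q.2.1 * Wf2 n q.2.2) p :=
    (Filter.eventuallyEq_of_mem (hOopen.mem_nhds hpO) hxi2O).fderiv_eq
  have hfd3 : fderiv ℝ (xi3 (wignerDfun j m n)) p
      = fderiv ℝ (fun q : ℝ×ℝ×ℝ => efu m q.1 * dd0 j m n q.2.1
          * (efu n q.2.2 * (Complex.I*(n:ℂ)))) p :=
    (Filter.eventuallyEq_of_mem (hOopen.mem_nhds hpO) hxi3O).fderiv_eq
  have e1 : fderiv ℝ (fun q : ℝ×ℝ×ℝ => efu m q.1 * Bf1 j m n q.2.1 * Wf1 n q.2.2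
        + efu m q.1 * dd1 j m n q.2.1 * Wf2 n q.2.2
        + efu m q.1 * Bf3 j m n q.2.1 * Wf1 n q.2.2) p = _ :=
    (((hasFDerivAt_T heφp hB1p hW1p).add (hasFDerivAt_T heφp hdd1p hW2p)).add
      (hasFDerivAt_T heφp hB3p hW1p)).fderiv
  have e2 : fderiv ℝ (fun q : ℝ×ℝ×ℝ => efu m q.1 * Bf1 j m n q.2.1 * Wf2 n q.2.2
        - efu m q.1 * dd1 j m n q.2.1 * Wf1 n q.2.2
        + efu m q.1 * Bf3 j m n q.2.1 * Wf2 n q.2.2) p = _ :=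
    (((hasFDerivAt_T heφp hB1p hW2p).sub (hasFDerivAt_T heφp hdd1p hW1p)).add
      (hasFDerivAt_T heφp hB3p hW2p)).fderiv
  have e3 : fderiv ℝ (fun q : ℝ×ℝ×ℝ => efu m q.1 * dd0 j m n q.2.1
        * (efu n q.2.2 * (Complex.I*(n:ℂ)))) p = _ :=
    (hasFDerivAt_T heφp hdd0p ((hasDerivAt_efu n p.2.2).mul_const (Complex.I*(n:ℂ)))).fderiv
  -- the ODE, complexified
  have hODEc : ((Real.sin p.2.1:ℝ):ℂ)^2 * dd2 j m n p.2.1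
      + ((Real.sin p.2.1:ℝ):ℂ)*((Real.cos p.2.1:ℝ):ℂ)*dd1 j m n p.2.1
      + (2*(m:ℂ)*(n:ℂ)*((Real.cos p.2.1:ℝ):ℂ) - (m:ℂ)^2 - (n:ℂ)^2)*dd0 j m n p.2.1
      + (j:ℂ)*((j:ℂ)+1)*((Real.sin p.2.1:ℝ):ℂ)^2*dd0 j m n p.2.1 = 0 := by
    have hr : (Real.sin p.2.1)^2 * (wcst j m n * gg2 (m-n) (m+n) (upoly j m n) p.2.1)
        + Real.sin p.2.1*Real.cos p.2.1*(wcst j m n * gg1 (m-n) (m+n) (upoly j m n) p.2.1)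
        + (2*(m:ℝ)*(n:ℝ)*Real.cos p.2.1 - (m:ℝ)^2 - (n:ℝ)^2)
            *(wcst j m n * gg0 (m-n) (m+n) (upoly j m n) p.2.1)
        + (j:ℝ)*((j:ℝ)+1)*(Real.sin p.2.1)^2*(wcst j m n * gg0 (m-n) (m+n) (upoly j m n) p.2.1)
          = 0 := by
      linear_combination (wcst j m n) * gg_ode j m n hm hn ⟨hθ0, hθπ⟩
    unfold dd0 dd1 dd2
    exact_mod_cast hr
  have hscθ : ((Real.sin p.2.1:ℝ):ℂ)^2 + ((Real.cos p.2.1:ℝ):ℂ)^2 = 1 := by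
    exact_mod_cast Real.sin_sq_add_cos_sq p.2.1
  have hscψ : ((Real.sin p.2.2:ℝ):ℂ)^2 + ((Real.cos p.2.2:ℝ):ℂ)^2 = 1 := by
    exact_mod_cast Real.sin_sq_add_cos_sq p.2.2
  have hI : (Complex.I)^2 = -1 := Complex.I_sq
  -- assemble
  rw [xi1_apply, xi2_apply, xi3_apply]
  unfold dphi dtheta dpsi pd
  rw [hfd1, hfd2, hfd3, e1, e2, e3, hFF hpO]
  unfold Bf1 Bf3 Wf1 Wf2
  simp only [ContinuousLinearMap.add_apply, ContinuousLinearMap.sub_apply, Lmap_apply]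
  norm_num
  have hspC2 : Complex.sin ((p.2.1:ℝ):ℂ) ≠ 0 := by rw [← Complex.ofReal_sin]; exact hspC
  push_cast
  push_cast at hODEc hscθ hscψ
  field_simp [hspC2]
  set S1 := Complex.sin ((p.2.1:ℝ):ℂ) with hS1d
  set C1 := Complex.cos ((p.2.1:ℝ):ℂ) with hC1d
  set S2 := Complex.sin ((p.2.2:ℝ):ℂ) with hS2d
  set C2 := Complex.cos ((p.2.2:ℝ):ℂ) with hC2d
  set E1 := efu m p.1 with hE1d
  set F1 := efu n p.2.2 with hF1d
  set X0 := dd0 j m n p.2.1 with hX0d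
  set X1 := dd1 j m n p.2.1 with hX1d
  set X2 := dd2 j m n p.2.1 with hX2d
  have hden : S1*S1*(S1*S1^2*(S1^2*S1))*(S1*S1) ≠ 0 := by simp [hspC2]
  linear_combination ((C2^2+S2^2)*E1*F1) * hODEc
    + (E1*F1*X0*((m:ℂ)^2*(C2^2+S2^2) - 2*(m:ℂ)*(n:ℂ)*C1*(C2^2+S2^2)
        + (n:ℂ)^2*C1^2*(C2^2+S2^2) + S1^2*(n:ℂ)^2)) * hI
    + (E1*F1*X0*((n:ℂ)^2*(1-C1^2) - S1^2*(j:ℂ)*((j:ℂ)+1))) * hscψ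
    + (-(E1*F1*X0*(n:ℂ)^2)) * hscθ

/-- The Wigner D-function `D^j_{mn}` is an eigenfunction of the Casimir operator
`ξ₁² + ξ₂² + ξ₃²` built from the left-invariant fields on `SO(3)` in Euler angles,
with eigenvalue `−j(j+1)`, at every point with `θ ∈ (0, π)`. -/
theorem wignerD_casimir_eigenfunction (j : ℕ) (m n : ℤ)
    (hm : |m| ≤ (j : ℤ)) (hn : |n| ≤ (j : ℤ))
    (p : ℝ × ℝ × ℝ) (hθ : p.2.1 ∈ Set.Ioo 0 Real.pi) :
    xi1 (xi1 (wignerDfun j m n)) p + xi2 (xi2 (wignerDfun j m n)) p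
        + xi3 (xi3 (wignerDfun j m n)) p
      = -(j : ℂ) * ((j : ℂ) + 1) * wignerDfun j m n p := by
  exact wignerD_casimir_eigenfunction' j m n hm hn p hθ
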